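/- (Proposition 2, gradient part.) Let p ∈ (0,1), n ≥ 1, μ > 0, and let d(q) = Σ_{i=1}^n (q_i − 1/n)². Let L^1,…,L^n : ℝ^d → ℝ each be differentiable at w ∈ ℝ^d, and define f_μ(w) = max_{q ∈ C_p} ( Σ_i q_i L^i(w) − μ d(q) ). Then f_μ is differentiable at w and ∇f_μ(w) = Σ_{i=1}^n (q_μ(w))_i ∇L^i(w), where q_μ(w) is the unique maximizer in C_p of q ↦ Σ_i q_i L^i(w) − μ d(q). -/

import Mathlib

open Finset

def Cp (n : ℕ) (p : ℝ) : Set (Fin n → ℝ) :=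
  {q | (∀ i, 0 ≤ q i) ∧ (∑ i, q i) = 1 ∧ ∀ i, q i ≤ 1 / ((n : ℝ) * (1 - p))}

theorem Cp_compact {n : ℕ} (p : ℝ) : IsCompact (Cp n p) := by
  have hclosed : IsClosed (Cp n p) := by
    have : Cp n p = (⋂ i, {q : Fin n → ℝ | 0 ≤ q i}) ∩
        ({q : Fin n → ℝ | ∑ i, q i = 1} ∩ ⋂ i, {q : Fin n → ℝ | q i ≤ 1 / ((n : ℝ) * (1 - p))}) := by
      ext q; simp [Cp, Set.mem_iInter, and_assoc]
    rw [this]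
    refine (isClosed_iInter fun i => isClosed_le continuous_const (continuous_apply i)).inter
      ((isClosed_eq (continuous_finset_sum _ fun i _ => continuous_apply i) continuous_const).inter
        (isClosed_iInter fun i => isClosed_le (continuous_apply i) continuous_const))
  refine IsCompact.of_isClosed_subset (isCompact_Icc (a := (0 : Fin n → ℝ)) (b := fun _ => 1)) hclosed ?_
  rintro q ⟨h0, hs, _⟩
  refine ⟨fun i => h0 i, fun i => ?_⟩
  calc q i ≤ ∑ j, q j := Finset.single_le_sum (fun j _ => h0 j) (Finset.mem_univ i)
  _ = 1 := hs

theorem stmt9 {n m : ℕ} (hn : 1 ≤ n) (p μ : ℝ) (hp0 : 0 < p) (hp1 : p < 1) (hμ : 0 < μ)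
    (L : Fin n → EuclideanSpace ℝ (Fin m) → ℝ) (w : EuclideanSpace ℝ (Fin m))
    (g : Fin n → EuclideanSpace ℝ (Fin m)) (hg : ∀ i, HasGradientAt (L i) (g i) w)
    (qμ : Fin n → ℝ) (hqμ : qμ ∈ Cp n p)
    (hmax : ∀ q ∈ Cp n p,
      ∑ i, q i * L i w - μ * ∑ i, (q i - 1 / (n : ℝ)) ^ 2 ≤
        ∑ i, qμ i * L i w - μ * ∑ i, (qμ i - 1 / (n : ℝ)) ^ 2) :
    HasGradientAt
      (fun w' : EuclideanSpace ℝ (Fin m) =>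
        sSup ((fun q : Fin n → ℝ =>
          ∑ i, q i * L i w' - μ * ∑ i, (q i - 1 / (n : ℝ)) ^ 2) '' Cp n p))
      (∑ i, qμ i • g i) w := by
  set φ : (Fin n → ℝ) → EuclideanSpace ℝ (Fin m) → ℝ :=
    fun q w' => ∑ i, q i * L i w' - μ * ∑ i, (q i - 1 / (n : ℝ)) ^ 2 with hφdef
  set f : EuclideanSpace ℝ (Fin m) → ℝ := fun w' => sSup ((fun q => φ q w') '' Cp n p) with hfdef
  have hC_cpt : IsCompact (Cp n p) := Cp_compact p
  have hC_ne : (Cp n p).Nonempty := ⟨qμ, hqμ⟩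
  have cont : ∀ w' : EuclideanSpace ℝ (Fin m), Continuous fun q : Fin n → ℝ => φ q w' := by
    intro w'
    exact (continuous_finset_sum _ fun i _ => (continuous_apply i).mul continuous_const).sub
      (continuous_const.mul (continuous_finset_sum _ fun i _ =>
        ((continuous_apply i).sub continuous_const).pow 2))
  -- value of f via any maximizer
  have hf_eq : ∀ (w' : EuclideanSpace ℝ (Fin m)) (q' : Fin n → ℝ), q' ∈ Cp n p →
      (∀ q ∈ Cp n p, φ q w' ≤ φ q' w') → f w' = φ q' w' := by
    intro w' q' hq' hmax'
    refine IsGreatest.csSup_eq ⟨⟨q', hq', rfl⟩, ?_⟩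
    rintro y ⟨q, hq, rfl⟩; exact hmax' q hq
  have hattain : ∀ w' : EuclideanSpace ℝ (Fin m), ∃ q' ∈ Cp n p, (∀ q ∈ Cp n p, φ q w' ≤ φ q' w') ∧ f w' = φ q' w' := by
    intro w'
    obtain ⟨q', hq', hmax'⟩ := hC_cpt.exists_isMaxOn hC_ne (cont w').continuousOn
    exact ⟨q', hq', fun q hq => hmax' hq, hf_eq w' q' hq' fun q hq => hmax' hq⟩
  have hfw : f w = φ qμ w := hf_eq w qμ hqμ hmax
  have hbdd : ∀ w' : EuclideanSpace ℝ (Fin m), BddAbove ((fun q => φ q w') '' Cp n p) :=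
    fun w' => (hC_cpt.image (cont w')).bddAbove
  have hlb : ∀ w' : EuclideanSpace ℝ (Fin m), φ qμ w' ≤ f w' := fun w' => le_csSup (hbdd w') ⟨qμ, hqμ, rfl⟩
  -- strong concavity at the maximizer
  have hstrong : ∀ q ∈ Cp n p, φ q w ≤ φ qμ w - (μ / 2) * ∑ i, (q i - qμ i) ^ 2 := by
    intro q hq
    obtain ⟨h1, h2, h3⟩ := hq
    obtain ⟨h1', h2', h3'⟩ := hqμ
    have hmmem : (fun i => (q i + qμ i) / 2) ∈ Cp n p := by
      refine ⟨fun i => by have := h1 i; have := h1' i; linarith, ?_, fun i => ?_⟩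
      · rw [show (fun i => (q i + qμ i) / 2) = fun i => q i / 2 + qμ i / 2 from funext fun i => by ring]
        rw [Finset.sum_add_distrib, ← Finset.sum_div, ← Finset.sum_div, h2, h2']; norm_num
      · have := h3 i; have := h3' i; linarith
    have hkey := hmax _ hmmem
    have e1 : ∑ i, ((q i + qμ i) / 2) * L i w
        = ∑ i, (q i * L i w / 2 + qμ i * L i w / 2) :=
      Finset.sum_congr rfl fun i _ => by ring
    have e2 : ∑ i, ((q i + qμ i) / 2 - 1 / (n : ℝ)) ^ 2
        = ∑ i, ((q i - 1 / (n : ℝ)) ^ 2 / 2 + (qμ i - 1 / (n : ℝ)) ^ 2 / 2 - (q i - qμ i) ^ 2 / 4) :=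
      Finset.sum_congr rfl fun i _ => by ring
    simp only [hφdef]
    rw [e1, e2] at hkey
    rw [Finset.sum_add_distrib] at hkey
    rw [show ∀ F G : Fin n → ℝ, ∑ i, (F i + G i - (q i - qμ i) ^ 2 / 4)
        = ∑ i, F i + ∑ i, G i - (∑ i, (q i - qμ i) ^ 2) / 4 from ?_] at hkey
    · rw [← Finset.sum_div, ← Finset.sum_div, ← Finset.sum_div, ← Finset.sum_div] at hkey
      nlinarith [hkey]
    · intro F G
      rw [Finset.sum_sub_distrib, Finset.sum_add_distrib, Finset.sum_div]
  have hshift : ∀ (q : Fin n → ℝ) (x : EuclideanSpace ℝ (Fin m)),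
      φ q x = φ q w + ∑ i, q i * (L i x - L i w) := by
    intro q x
    simp only [hφdef]
    have : ∑ i, q i * L i x = ∑ i, (q i * L i w + q i * (L i x - L i w)) :=
      Finset.sum_congr rfl fun i _ => by ring
    rw [this, Finset.sum_add_distrib]; ring
  -- lower bound for f
  have hlow_pt : ∀ x : EuclideanSpace ℝ (Fin m),
      f w + ∑ i, qμ i * (L i x - L i w) ≤ f x := by
    intro x
    have := hlb x
    rw [hshift qμ x, ← hfw] at this
    exact this
  -- upper bound for f
  have hup_pt : ∀ x : EuclideanSpace ℝ (Fin m),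
      f x ≤ f w + ∑ i, qμ i * (L i x - L i w) + (∑ i, (L i x - L i w) ^ 2) / (2 * μ) := by
    intro x
    obtain ⟨q', hq', hmax', hfval⟩ := hattain x
    have h2 := hstrong q' hq'
    have hsplit : ∑ i, q' i * (L i x - L i w)
        = ∑ i, qμ i * (L i x - L i w) + ∑ i, (q' i - qμ i) * (L i x - L i w) := by
      rw [← Finset.sum_add_distrib]; exact Finset.sum_congr rfl fun i _ => by ring
    have hB : (0:ℝ) ≤ ∑ i, (q' i - qμ i) ^ 2 := Finset.sum_nonneg fun i _ => sq_nonneg _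
    have hT : (0:ℝ) ≤ ∑ i, (L i x - L i w) ^ 2 := Finset.sum_nonneg fun i _ => sq_nonneg _
    have hCS := Finset.sum_mul_sq_le_sq_mul_sq Finset.univ
      (fun i => q' i - qμ i) (fun i => L i x - L i w)
    have h3 : ∑ i, (q' i - qμ i) * (L i x - L i w)
        ≤ μ / 2 * ∑ i, (q' i - qμ i) ^ 2 + (∑ i, (L i x - L i w) ^ 2) / (2 * μ) := by
      set B := ∑ i, (q' i - qμ i) ^ 2
      set T := ∑ i, (L i x - L i w) ^ 2
      set X := ∑ i, (q' i - qμ i) * (L i x - L i w)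
      rw [show μ / 2 * B + T / (2 * μ) = (μ ^ 2 * B + T) / (2 * μ) from by field_simp]
      rw [le_div_iff₀ (by positivity)]
      rcases le_or_gt X 0 with hX | hX
      · nlinarith [mul_pos hμ hμ]
      · nlinarith [mul_le_mul_of_nonneg_left hCS (by positivity : (0:ℝ) ≤ 4 * μ ^ 2),
          sq_nonneg (μ ^ 2 * B - T),
          (by positivity : (0:ℝ) < μ ^ 2 * B + T + 2 * μ * X)]
    calc f x = φ q' x := hfval
      _ = φ q' w + ∑ i, q' i * (L i x - L i w) := hshift q' x
      _ ≤ (φ qμ w - μ / 2 * ∑ i, (q' i - qμ i) ^ 2) + ∑ i, q' i * (L i x - L i w) := by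
          linarith
      _ = φ qμ w + ∑ i, qμ i * (L i x - L i w)
            + (∑ i, (q' i - qμ i) * (L i x - L i w) - μ / 2 * ∑ i, (q' i - qμ i) ^ 2) := by
          rw [hsplit]; ring
      _ ≤ f w + ∑ i, qμ i * (L i x - L i w) + (∑ i, (L i x - L i w) ^ 2) / (2 * μ) := by
          rw [hfw]; linarith
  -- derivatives of the bounding functions
  have hsumF : HasFDerivAt (fun x : EuclideanSpace ℝ (Fin m) => ∑ i, qμ i * (L i x - L i w))
      (∑ i, qμ i • (InnerProductSpace.toDual ℝ (EuclideanSpace ℝ (Fin m)) (g i))) w := by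
    refine HasFDerivAt.fun_sum fun i _ => ?_
    simpa using (((hg i).hasFDerivAt.sub_const (L i w)).const_mul (qμ i))
  have htoDual : InnerProductSpace.toDual ℝ (EuclideanSpace ℝ (Fin m)) (∑ i, qμ i • g i)
      = ∑ i, qμ i • InnerProductSpace.toDual ℝ (EuclideanSpace ℝ (Fin m)) (g i) := by
    rw [map_sum]
    exact Finset.sum_congr rfl fun i _ => by simp
  have hlowF : HasFDerivAt (fun x : EuclideanSpace ℝ (Fin m) =>
      f w + ∑ i, qμ i * (L i x - L i w))
      (InnerProductSpace.toDual ℝ (EuclideanSpace ℝ (Fin m)) (∑ i, qμ i • g i)) w := by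
    rw [htoDual]; exact hsumF.const_add (f w)
  have hzeroF : HasFDerivAt (fun x : EuclideanSpace ℝ (Fin m) =>
      (∑ i, (L i x - L i w) ^ 2) / (2 * μ)) (0 : EuclideanSpace ℝ (Fin m) →L[ℝ] ℝ) w := by
    have h1 : HasFDerivAt (fun x : EuclideanSpace ℝ (Fin m) => ∑ i, (L i x - L i w) ^ 2)
        (0 : EuclideanSpace ℝ (Fin m) →L[ℝ] ℝ) w := by
      have h2 := HasFDerivAt.fun_sum (fun i (_ : i ∈ Finset.univ) =>
        (((hg i).hasFDerivAt.sub_const (L i w)).fun_mul ((hg i).hasFDerivAt.sub_const (L i w))))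
      refine (h2.congr_fderiv ?_).congr_of_eventuallyEq (Filter.Eventually.of_forall fun x => ?_)
      · simp
      · exact Finset.sum_congr rfl fun i _ => sq (L i x - L i w) ▸ by rw [sq]
    have heq : (fun x : EuclideanSpace ℝ (Fin m) => (∑ i, (L i x - L i w) ^ 2) / (2 * μ))
        = fun x => (2 * μ)⁻¹ * ∑ i, (L i x - L i w) ^ 2 :=
      funext fun x => by rw [div_eq_inv_mul]
    rw [heq]
    simpa using h1.const_mul ((2 * μ)⁻¹)
  have hupF : HasFDerivAt (fun x : EuclideanSpace ℝ (Fin m) =>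
      f w + ∑ i, qμ i * (L i x - L i w) + (∑ i, (L i x - L i w) ^ 2) / (2 * μ))
      (InnerProductSpace.toDual ℝ (EuclideanSpace ℝ (Fin m)) (∑ i, qμ i • g i)) w := by
    simpa using hlowF.fun_add hzeroF
  -- squeeze
  rw [hasGradientAt_iff_hasFDerivAt]
  refine HasFDerivAt.of_isLittleO ?_
  have hl := hlowF.isLittleO
  have hu := hupF.isLittleO
  rw [Asymptotics.isLittleO_iff] at hl hu ⊢
  intro c hc
  filter_upwards [hl hc, hu hc] with x h1 h2
  simp only [Real.norm_eq_abs, sub_self, mul_zero, Finset.sum_const_zero, add_zero,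
    zero_pow two_ne_zero, zero_div] at h1 h2 ⊢
  rw [abs_le] at h1 h2 ⊢
  have hT : (0:ℝ) ≤ ∑ i, (L i x - L i w) ^ 2 := Finset.sum_nonneg fun i _ => sq_nonneg _
  constructor
  · have := hlow_pt x
    linarith [h1.1]
  · have := hup_pt x
    linarith [h2.2]
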